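/- Let n be a squarefree integer with exactly m ≥ 1 distinct prime factors and let l ≥ 1. Then A_l(n) = Σ_{k=1}^{m} l^k · S(m, k), where S(m, k) denotes the Stirling numbers of the second kind. -/

import Mathlib

set_option linter.unusedSectionVars false

/-- `A l n`: number of unordered factorizations of `n` into parts `≥ 2`
of at most `l` colors (multisets of (value, color) pairs, colors in `{0,…,l-1}`). -/
noncomputable def A (l n : ℕ) : ℕ :=
  Set.ncard {s : Multiset (ℕ × ℕ) |
    (∀ p ∈ s, 2 ≤ p.1 ∧ p.2 < l) ∧ (s.map Prod.fst).prod = n}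

/-- Stirling numbers of the second kind. -/
def stirling2 : ℕ → ℕ → ℕ
  | 0, 0 => 1
  | 0, _ + 1 => 0
  | _ + 1, 0 => 0
  | n + 1, k + 1 => (k + 1) * stirling2 n (k + 1) + stirling2 n k

lemma stirling2_zero_right (m : ℕ) : stirling2 (m + 1) 0 = 0 := rfl

lemma stirling2_eq_zero_of_lt : ∀ {m k : ℕ}, m < k → stirling2 m k = 0
  | 0, k + 1, _ => rfl
  | m + 1, k + 1, h => by
    have h1 : m < k + 1 := by omega
    have h2 : m < k := by omega
    simp [stirling2, stirling2_eq_zero_of_lt h1, stirling2_eq_zero_of_lt h2]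

lemma stirling2_binom (m : ℕ) : ∀ k : ℕ,
    stirling2 (m + 1) (k + 1) = ∑ j ∈ Finset.range (m + 1), m.choose j * stirling2 j k := by
  induction m with
  | zero => intro k; simp [stirling2]
  | succ m ih =>
    intro k
    have split : ∑ j ∈ Finset.range (m + 2), (m + 1).choose j * stirling2 j k
        = ∑ j ∈ Finset.range (m + 1), m.choose j * stirling2 j k
          + ∑ j ∈ Finset.range (m + 1), m.choose j * stirling2 (j + 1) k := by
      rw [Finset.sum_range_succ' (fun j => (m + 1).choose j * stirling2 j k) (m + 1)]
      have hc : ∀ j, (m + 1).choose (j + 1) = m.choose j + m.choose (j + 1) := fun j =>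
        Nat.choose_succ_succ m j
      simp only [hc, add_mul, Finset.sum_add_distrib]
      have h1 : ∑ j ∈ Finset.range (m + 1), m.choose (j + 1) * stirling2 (j + 1) k
          + m.choose 0 * stirling2 0 k
          = ∑ j ∈ Finset.range (m + 1), m.choose j * stirling2 j k := by
        rw [← Finset.sum_range_succ' (fun j => m.choose j * stirling2 j k) (m + 1),
          Finset.sum_range_succ]
        simp [Nat.choose_succ_self]
      have h0 : (m + 1).choose 0 * stirling2 0 k = m.choose 0 * stirling2 0 k := by
        simp
      omega
    show stirling2 (m + 2) (k + 1) = ∑ j ∈ Finset.range (m + 2), (m + 1).choose j * stirling2 j k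
    cases k with
    | zero =>
      rw [split]
      have hz : ∀ j ∈ Finset.range (m + 1), m.choose j * stirling2 (j + 1) 0 = 0 := by
        intro j _; simp [stirling2_zero_right]
      rw [Finset.sum_congr rfl hz]
      simp [stirling2, ← ih 0]
    | succ k =>
      rw [split]
      have hs : ∀ j ∈ Finset.range (m + 1),
          m.choose j * stirling2 (j + 1) (k + 1)
            = (k + 1) * (m.choose j * stirling2 j (k + 1)) + m.choose j * stirling2 j k := by
        intro j _; simp [stirling2]; ring
      rw [Finset.sum_congr rfl hs, Finset.sum_add_distrib, ← Finset.mul_sum, ← ih (k + 1), ← ih k]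
      show stirling2 (m + 2) (k + 2) = _
      simp [stirling2]; ring


noncomputable def f (l m : ℕ) : ℕ := ∑ k ∈ Finset.range (m + 1), l ^ k * stirling2 m k

lemma f_zero (l : ℕ) : f l 0 = 1 := by simp [f]; rfl

lemma f_succ (l m : ℕ) : f l (m + 1) = l * ∑ j ∈ Finset.range (m + 1), m.choose j * f l j := by
  have h1 : f l (m + 1)
      = ∑ k ∈ Finset.range (m + 1), l ^ (k + 1) * stirling2 (m + 1) (k + 1) := by
    rw [f, Finset.sum_range_succ' (fun k => l ^ k * stirling2 (m + 1) k) (m + 1)]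
    simp [stirling2_zero_right]
  rw [h1]
  have h2 : ∀ k ∈ Finset.range (m + 1), l ^ (k + 1) * stirling2 (m + 1) (k + 1)
      = ∑ j ∈ Finset.range (m + 1), l * (m.choose j * (l ^ k * stirling2 j k)) := by
    intro k _
    rw [stirling2_binom, Finset.mul_sum]
    congr 1; ext j; ring
  rw [Finset.sum_congr rfl h2, Finset.sum_comm, Finset.mul_sum]
  refine Finset.sum_congr rfl fun j hj => ?_
  have hjm : j + 1 ≤ m + 1 := by
    have := Finset.mem_range.mp hj; omega
  have hext : ∑ k ∈ Finset.range (m + 1), l ^ k * stirling2 j k = f l j := by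
    rw [f]
    apply (Finset.sum_subset (Finset.range_subset_range.mpr hjm) _).symm
    intro k _ hk
    have : j < k := by simp only [Finset.mem_range] at *; omega
    simp [stirling2_eq_zero_of_lt this]
  calc ∑ k ∈ Finset.range (m + 1), l * (m.choose j * (l ^ k * stirling2 j k))
      = l * (m.choose j * ∑ k ∈ Finset.range (m + 1), l ^ k * stirling2 j k) := by
        rw [Finset.mul_sum, Finset.mul_sum]
    _ = l * (m.choose j * f l j) := by rw [hext]



def Sset (l n : ℕ) : Set (Multiset (ℕ × ℕ)) :=
  {s : Multiset (ℕ × ℕ) | (∀ p ∈ s, 2 ≤ p.1 ∧ p.2 < l) ∧ (s.map Prod.fst).prod = n}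

lemma A_eq (l n : ℕ) : A l n = (Sset l n).ncard := rfl

lemma fst_dvd {l n : ℕ} {s : Multiset (ℕ × ℕ)} (hs : s ∈ Sset l n) {x : ℕ × ℕ}
    (hx : x ∈ s) : x.1 ∣ n := by
  rw [← hs.2]
  exact Multiset.dvd_prod (Multiset.mem_map_of_mem _ hx)

lemma card_le {l n : ℕ} {s : Multiset (ℕ × ℕ)} (hs : s ∈ Sset l n) :
    Multiset.card s ≤ n := by
  have h2 : (2 : ℕ) ^ Multiset.card (s.map Prod.fst) ≤ (s.map Prod.fst).prod := by
    apply Multiset.pow_card_le_prod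
    intro x hx
    obtain ⟨y, hy, rfl⟩ := Multiset.mem_map.mp hx
    exact (hs.1 y hy).1
  rw [hs.2, Multiset.card_map] at h2
  calc Multiset.card s ≤ 2 ^ Multiset.card s := (Nat.lt_two_pow_self).le
    _ ≤ n := h2

lemma finite_Sset0 (l n : ℕ) (hn : n ≠ 0) : (Sset l n).Finite := by
  classical
  set T : Multiset (ℕ × ℕ) := n • (n.divisors ×ˢ Finset.range l).val with hT
  apply Set.Finite.subset (Set.finite_range (fun x : T.powerset.toFinset => (x : Multiset (ℕ × ℕ))))
  intro s hs
  have hsub : s ≤ T := by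
    rw [Multiset.le_iff_count]
    intro x
    by_cases hx : x ∈ s
    · have h1 : x ∈ (n.divisors ×ˢ Finset.range l) := by
        rw [Finset.mem_product]
        exact ⟨Nat.mem_divisors.mpr ⟨fst_dvd hs hx, hn⟩, Finset.mem_range.mpr (hs.1 x hx).2⟩
      have h2 : 1 ≤ T.count x := by
        rw [hT, Multiset.count_nsmul]
        have : 1 ≤ Multiset.count x (n.divisors ×ˢ Finset.range l).val :=
          Multiset.one_le_count_iff_mem.mpr h1
        have hn1 : 1 ≤ n := Nat.one_le_iff_ne_zero.mpr hn
        calc 1 ≤ 1 * 1 := by norm_num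
          _ ≤ n * Multiset.count x (n.divisors ×ˢ Finset.range l).val :=
            Nat.mul_le_mul hn1 this
      have h3 : Multiset.count x s ≤ Multiset.card s := Multiset.count_le_card _ _
      have h4 : Multiset.card s ≤ n := card_le hs
      rw [hT, Multiset.count_nsmul]
      have h5 : 1 ≤ Multiset.count x (n.divisors ×ˢ Finset.range l).val :=
        Multiset.one_le_count_iff_mem.mpr h1
      calc Multiset.count x s ≤ n := le_trans h3 h4
        _ = n * 1 := (mul_one n).symm
        _ ≤ n * Multiset.count x (n.divisors ×ˢ Finset.range l).val := Nat.mul_le_mul_left n h5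
    · simp [Multiset.count_eq_zero_of_notMem hx]
  exact ⟨⟨s, by simp [Multiset.mem_powerset, hsub]⟩, rfl⟩

lemma A_one (l : ℕ) : A l 1 = 1 := by
  rw [A_eq]
  have : Sset l 1 = {0} := by
    ext s
    constructor
    · intro hs
      simp only [Set.mem_singleton_iff]
      by_contra hne
      obtain ⟨x, hx⟩ := Multiset.exists_mem_of_ne_zero hne
      have := fst_dvd hs hx
      have h2 := (hs.1 x hx).1
      have := Nat.le_of_dvd one_pos this
      omega
    · rintro rfl
      exact ⟨by simp, by simp⟩
  rw [this, Set.ncard_singleton]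


lemma Sset_zero (l : ℕ) : Sset l 0 = ∅ := by
  ext s
  simp only [Set.mem_empty_iff_false, iff_false]
  rintro ⟨h1, h2⟩
  have h0 : (0 : ℕ) ∈ s.map Prod.fst := by
    rw [← Multiset.prod_eq_zero_iff (M₀ := ℕ), h2]
  obtain ⟨y, hy, hy0⟩ := Multiset.mem_map.mp h0
  have := (h1 y hy).1
  omega

lemma finite_Sset (l n : ℕ) : (Sset l n).Finite := by
  rcases eq_or_ne n 0 with rfl | hn
  · rw [Sset_zero]; exact Set.finite_empty
  · exact finite_Sset0 l n hn

noncomputable def FS (l n : ℕ) : Finset (Multiset (ℕ × ℕ)) := (finite_Sset l n).toFinset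

lemma mem_FS {l n : ℕ} {s : Multiset (ℕ × ℕ)} : s ∈ FS l n ↔ s ∈ Sset l n := by
  simp [FS]

lemma A_eq_card (l n : ℕ) : A l n = (FS l n).card := by
  rw [A_eq, FS, Set.ncard_eq_toFinset_card _ (finite_Sset l n)]

section Rec

variable {l p n' : ℕ} (hp : p.Prime) (hpn : ¬ p ∣ n') (hn : n' ≠ 0)

include hp hpn in
lemma not_dvd_of_mem {M : ℕ} {t : Multiset (ℕ × ℕ)} (ht : t ∈ Sset l M) (hM : M ∣ n')
    {x : ℕ × ℕ} (hx : x ∈ t) : ¬ p ∣ x.1 :=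
  fun h => hpn (h.trans ((fst_dvd ht hx).trans hM))

include hp hpn hn in
lemma FS_eq : FS l (p * n') = (n'.divisors ×ˢ Finset.range l).biUnion
    (fun x => (FS l (n' / x.1)).image (fun t => (p * x.1, x.2) ::ₘ t)) := by
  classical
  ext s
  simp only [Finset.mem_biUnion, Finset.mem_image, Finset.mem_product, Nat.mem_divisors,
    Finset.mem_range, mem_FS]
  constructor
  · intro hs
    -- find the unique element divisible by p
    have hdvd : p ∣ (s.map Prod.fst).prod := by rw [hs.2]; exact Dvd.intro n' rfl
    obtain ⟨a, ha, hpa⟩ := hp.prime.exists_mem_multiset_dvd hdvd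
    obtain ⟨x, hx, rfl⟩ := Multiset.mem_map.mp ha
    set t := s.erase x with htdef
    have hst : s = x ::ₘ t := (Multiset.cons_erase hx).symm
    set d := x.1 / p with hd
    have hxd : x.1 = p * d := (Nat.mul_div_cancel' hpa).symm
    have hprod : p * d * (t.map Prod.fst).prod = p * n' := by
      rw [← hxd, ← hs.2, hst]; simp
    have hdn : d * (t.map Prod.fst).prod = n' := by
      have hp0 : p ≠ 0 := hp.pos.ne'
      have := hprod
      rw [mul_assoc] at this
      exact Nat.eq_of_mul_eq_mul_left hp.pos this
    have hddvd : d ∣ n' := ⟨(t.map Prod.fst).prod, hdn.symm⟩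
    have hd0 : d ≠ 0 := by intro h0; rw [h0, zero_mul] at hdn; exact hn hdn.symm
    have htprod : (t.map Prod.fst).prod = n' / d := by
      rw [← hdn, Nat.mul_div_cancel_left _ (Nat.pos_of_ne_zero hd0)]
    have htmem : t ∈ Sset l (n' / d) := by
      refine ⟨fun y hy => hs.1 y ?_, htprod⟩
      rw [hst]; exact Multiset.mem_cons_of_mem hy
    refine ⟨(d, x.2), ⟨⟨hddvd, hn⟩, (hs.1 x hx).2⟩, t, htmem, ?_⟩
    rw [hst]
    congr 1
    rw [← hxd]
  · rintro ⟨⟨d, c⟩, ⟨⟨hd, -⟩, hc⟩, t, ht, rfl⟩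
    have hd0 : d ≠ 0 := by rintro rfl; exact hn (Nat.eq_zero_of_zero_dvd hd)
    constructor
    · intro y hy
      rcases Multiset.mem_cons.mp hy with rfl | hy'
      · refine ⟨?_, hc⟩
        have : 1 ≤ d := Nat.pos_of_ne_zero hd0
        calc 2 ≤ p := hp.two_le
          _ = p * 1 := (mul_one p).symm
          _ ≤ p * d := Nat.mul_le_mul_left p this
      · exact ht.1 y hy'
    · simp only [Multiset.map_cons, Multiset.prod_cons, ht.2]
      rw [mul_assoc, Nat.mul_div_cancel' hd]

include hp hpn hn in
lemma A_rec : A l (p * n') = ∑ d ∈ n'.divisors, l * A l (n' / d) := by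
  classical
  rw [A_eq_card, FS_eq hp hpn hn, Finset.card_biUnion]
  · rw [Finset.sum_product]
    refine Finset.sum_congr rfl fun d hd => ?_
    have : ∀ c ∈ Finset.range l,
        ((FS l (n' / (d, c).1)).image (fun t => (p * (d, c).1, (d, c).2) ::ₘ t)).card
          = A l (n' / d) := by
      intro c _
      rw [Finset.card_image_of_injective _ (fun t₁ t₂ h => (Multiset.cons_inj_right _).mp h),
        A_eq_card]
    rw [Finset.sum_congr rfl this, Finset.sum_const, Finset.card_range, smul_eq_mul]
  · -- disjointness
    rintro ⟨d₁, c₁⟩ hx ⟨d₂, c₂⟩ hy hne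
    simp only [Finset.mem_coe, Finset.mem_product, Nat.mem_divisors, Finset.mem_range] at hx hy
    rw [Function.onFun, Finset.disjoint_left]
    rintro s hs1 hs2
    simp only [Finset.mem_image, mem_FS] at hs1 hs2
    obtain ⟨t₁, ht₁, rfl⟩ := hs1
    obtain ⟨t₂, ht₂, heq⟩ := hs2
    have hmem : ((p * d₁, c₁) : ℕ × ℕ) ∈ (p * d₂, c₂) ::ₘ t₂ := by
      rw [heq]; exact Multiset.mem_cons_self _ _
    rcases Multiset.mem_cons.mp hmem with h | h
    · apply hne
      have h1 : p * d₁ = p * d₂ := congrArg Prod.fst h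
      have h2 : c₁ = c₂ := congrArg Prod.snd h
      have : d₁ = d₂ := Nat.eq_of_mul_eq_mul_left hp.pos h1
      simp [this, h2]
    · exact not_dvd_of_mem hp hpn ht₂ (Nat.div_dvd_of_dvd hy.1.1) h (Dvd.intro d₁ rfl)

end Rec


lemma sum_divisors_card (n' : ℕ) (hn : n' ≠ 0) (hsq : Squarefree n') (g : ℕ → ℕ) :
    ∑ d ∈ n'.divisors, g d.primeFactors.card
      = ∑ j ∈ Finset.range (n'.primeFactors.card + 1), n'.primeFactors.card.choose j * g j := by
  classical
  have step1 : ∑ d ∈ n'.divisors, g d.primeFactors.card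
      = ∑ T ∈ n'.primeFactors.powerset, g T.card := by
    refine Finset.sum_nbij' (fun d => d.primeFactors) (fun T => ∏ q ∈ T, q) ?_ ?_ ?_ ?_ ?_
    · intro d hd
      rw [Finset.mem_powerset]
      exact Nat.primeFactors_mono (Nat.mem_divisors.mp hd).1 hn
    · intro T hT
      rw [Finset.mem_powerset] at hT
      rw [Nat.mem_divisors]
      refine ⟨?_, hn⟩
      calc ∏ q ∈ T, q ∣ ∏ q ∈ n'.primeFactors, q := Finset.prod_dvd_prod_of_subset _ _ _ hT
        _ = n' := Nat.prod_primeFactors_of_squarefree hsq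
    · intro d hd
      exact Nat.prod_primeFactors_of_squarefree
        ((Nat.mem_divisors.mp hd).1.trans (dvd_refl n') |> fun h =>
          hsq.squarefree_of_dvd (Nat.mem_divisors.mp hd).1)
    · intro T hT
      rw [Finset.mem_powerset] at hT
      exact Nat.primeFactors_prod (fun q hq => Nat.prime_of_mem_primeFactors (hT hq))
    · intro d hd; rfl
  rw [step1, Finset.sum_powerset]
  refine Finset.sum_congr rfl fun j hj => ?_
  have : ∀ T ∈ Finset.powersetCard j n'.primeFactors, g T.card = g j := by
    intro T hT
    rw [(Finset.mem_powersetCard.mp hT).2]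
  rw [Finset.sum_congr rfl this, Finset.sum_const, Finset.card_powersetCard, smul_eq_mul]

lemma A_formula (l : ℕ) : ∀ n, n ≠ 0 → Squarefree n → A l n = f l n.primeFactors.card := by
  intro n
  induction n using Nat.strong_induction_on with
  | _ n ih =>
    intro hn hsq
    rcases eq_or_ne n 1 with rfl | hn1
    · simp [A_one, f_zero]
    -- n ≥ 2
    have hp : n.minFac.Prime := Nat.minFac_prime hn1
    set p := n.minFac with hpdef
    set n' := n / p with hn'def
    have hpd : p ∣ n := Nat.minFac_dvd n
    have hfact : n = p * n' := (Nat.mul_div_cancel' hpd).symm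
    have hn'0 : n' ≠ 0 := by
      intro h; rw [h, mul_zero] at hfact; exact hn hfact
    have hpn' : ¬ p ∣ n' := by
      intro hdvd
      have : p * p ∣ n := by
        rw [hfact]; exact mul_dvd_mul_left p hdvd
      exact hp.one_lt.ne' (Nat.isUnit_iff.mp (hsq p this))
    have hsq' : Squarefree n' := hsq.squarefree_of_dvd ⟨p, by rw [hfact]; ring⟩
    have hn'lt : n' < n := Nat.div_lt_self (Nat.pos_of_ne_zero hn) hp.one_lt
    have hcard : n.primeFactors.card = n'.primeFactors.card + 1 := by
      rw [hfact, Nat.primeFactors_mul hp.pos.ne' hn'0, hp.primeFactors,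
        ← Finset.insert_eq,
        Finset.card_insert_of_notMem (fun hmem => hpn' (Nat.dvd_of_mem_primeFactors hmem))]
    rw [hfact, A_rec hp hpn' hn'0]
    have hterm : ∀ d ∈ n'.divisors, l * A l (n' / d) = l * f l (n' / d).primeFactors.card := by
      intro d hd
      have hddvd : d ∣ n' := (Nat.mem_divisors.mp hd).1
      have h1 : n' / d ∣ n' := Nat.div_dvd_of_dvd hddvd
      have h2 : n' / d < n := lt_of_le_of_lt (Nat.div_le_self _ _) hn'lt
      have h3 : n' / d ≠ 0 :=
        (Nat.div_pos (Nat.le_of_dvd (Nat.pos_of_ne_zero hn'0) hddvd)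
          (Nat.pos_of_mem_divisors hd)).ne'
      rw [ih _ h2 h3 (hsq'.squarefree_of_dvd h1)]
    rw [Finset.sum_congr rfl hterm, ← Finset.mul_sum,
      Nat.sum_div_divisors n' (fun d => f l d.primeFactors.card),
      show n'.divisors.sum (fun d => f l d.primeFactors.card)
        = ∑ d ∈ n'.divisors, f l d.primeFactors.card from rfl,
      sum_divisors_card n' hn'0 hsq', ← f_succ, ← hcard, hfact]


theorem A_squarefree (l m n : ℕ) (hl : 1 ≤ l) (hm : 1 ≤ m)
    (hn : Squarefree n) (hcard : n.primeFactors.card = m) :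
    A l n = ∑ k ∈ Finset.Icc 1 m, l ^ k * stirling2 m k := by
  have hn0 : n ≠ 0 := hn.ne_zero
  rw [A_formula l n hn0 hn, hcard]
  obtain ⟨m', rfl⟩ : ∃ m', m = m' + 1 := ⟨m - 1, by omega⟩
  rw [f, Finset.sum_range_succ' (fun k => l ^ k * stirling2 (m' + 1) k) (m' + 1)]
  rw [show Finset.Icc 1 (m' + 1) = Finset.Ico 1 (m' + 2) from (Finset.Ico_add_one_right_eq_Icc 1 (m'+1)).symm,
    Finset.sum_Ico_eq_sum_range]
  simp only [stirling2_zero_right, mul_zero, add_zero, pow_zero, one_mul]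
  refine (Finset.sum_congr (by norm_num) fun i _ => ?_).symm
  rw [add_comm 1 i]
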